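/- For any m ≥ 1, n ≥ 2, and k ≥ 2, there exists a family of mn + m·C(k,2) affine hyperplanes in ℝ^n such that every point of {0,1,…,m}^n \ {0} is covered at least k times (with multiplicity), and the origin is covered zero times. Explicitly, one may take the hyperplanes x_i = j for 1 ≤ i ≤ n and 1 ≤ j ≤ m, together with k−t−1 copies of each hyperplane x_1+⋯+x_n = s for tm+1 ≤ s ≤ (t+1)m and 0 ≤ t ≤ k−2. -/

import Mathlib

open Finset

private lemma pascal2 (a : ℕ) : (a + 1).choose 2 = a.choose 2 + a := by
  rw [Nat.choose_succ_succ, Nat.choose_one_right]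
  exact Nat.add_comm _ _

/-- for `m ≥ 1`, `n ≥ 2`, `k ≥ 2` there is a family of
`mn + m·C(k,2)` affine hyperplanes in `ℝ^n` covering every point of
`{0,…,m}^n \ {0}` at least `k` times (with multiplicity) and never covering the
origin. -/
theorem stmt11 (m n k : ℕ) (hm : 1 ≤ m) (hn : 2 ≤ n) (hk : 2 ≤ k) :
    ∃ (c : Fin (m * n + m * Nat.choose k 2) → Fin n → ℝ)
      (c₀ : Fin (m * n + m * Nat.choose k 2) → ℝ),
      (∀ j, c j ≠ 0) ∧
      (∀ x : Fin n → ℝ, (∀ i, ∃ j : ℕ, j ≤ m ∧ x i = (j : ℝ)) → x ≠ 0 →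
        k ≤ Set.ncard {j | ∑ i, c j i * x i = c₀ j}) ∧
      (∀ j, ∑ i, c j i * (0 : ℝ) ≠ c₀ j) := by
  classical
  set N := m * n + m * Nat.choose k 2 with hN
  set A : ℕ → ℕ := fun t => k.choose 2 - (k - t).choose 2 with hA
  have hAle : ∀ t, A t ≤ k.choose 2 := fun t => Nat.sub_le _ _
  have hAstep : ∀ t, t ≤ k - 2 → A (t + 1) = A t + (k - 1 - t) := by
    intro t ht
    have ha : k - t = (k - t - 1) + 1 := by omega
    have h4 : (k - t).choose 2 = (k - t - 1).choose 2 + (k - t - 1) := by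
      rw [ha]; exact pascal2 _
    have h2 : (k - t).choose 2 ≤ k.choose 2 := Nat.choose_le_choose 2 (Nat.sub_le _ _)
    have eAt : A t = k.choose 2 - (k - t).choose 2 := rfl
    have eAt1 : A (t + 1) = k.choose 2 - (k - t - 1).choose 2 := by
      have h3 : k - (t + 1) = k - t - 1 := by omega
      simp only [hA, h3]
    omega
  set g : ℕ → ℕ := fun q => Nat.findGreatest (fun t => A t ≤ q) (k - 2) with hg
  have hgval : ∀ t q, t ≤ k - 2 → A t ≤ q → q < A (t + 1) → g q = t := by
    intro t q ht h1 h2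
    refine Nat.findGreatest_eq_iff.mpr ⟨ht, fun _ => h1, ?_⟩
    intro t' hlt hle hP
    have hmono : A (t + 1) ≤ A t' :=
      Nat.sub_le_sub_left (Nat.choose_le_choose 2 (by omega : k - t' ≤ k - (t + 1))) _
    omega
  set c : Fin N → Fin n → ℝ := fun j i =>
    if j.val < m * n then (if i.val = j.val / m then 1 else 0) else 1 with hc
  set e : Fin N → ℕ := fun j =>
    if j.val < m * n then j.val % m + 1
    else g ((j.val - m * n) / m) * m + (j.val - m * n) % m + 1 with he
  refine ⟨c, fun j => (e j : ℝ), ?_, ?_, ?_⟩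
  · -- c j ≠ 0
    intro j hj0
    by_cases h : j.val < m * n
    · have hd : j.val / m < n := by
        apply Nat.div_lt_of_lt_mul
        omega
      have := congrFun hj0 ⟨j.val / m, hd⟩
      simp [hc, h] at this
    · have := congrFun hj0 ⟨0, by omega⟩
      simp [hc, h] at this
  · -- coverage
    intro x hx hx0
    choose y hy1 hy2 using hx
    set s := ∑ i, y i with hs
    have hs1 : 1 ≤ s := by
      obtain ⟨i, hi⟩ := Function.ne_iff.mp hx0
      have hyi : y i ≠ 0 := by
        intro h
        apply hi
        rw [Pi.zero_apply, hy2 i, h]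
        simp
      have : y i ≤ s := Finset.single_le_sum (fun i _ => Nat.zero_le _) (Finset.mem_univ i)
      omega
    obtain ⟨t, u, hum, hsu⟩ : ∃ t u, u < m ∧ s = t * m + u + 1 := by
      refine ⟨(s - 1) / m, (s - 1) % m, Nat.mod_lt _ (by omega), ?_⟩
      have h := Nat.div_add_mod (s - 1) m
      have h2 : (s - 1) / m * m = m * ((s - 1) / m) := Nat.mul_comm _ _
      omega
    -- the set of nonzero coordinates
    set D := Finset.univ.filter (fun i : Fin n => y i ≠ 0) with hD
    have hcardD : t + 1 ≤ D.card := by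
      have hseq : ∑ i ∈ D, y i = s := Finset.sum_filter_ne_zero _
      have hsle : ∑ i ∈ D, y i ≤ D.card • m :=
        Finset.sum_le_card_nsmul D y m (fun i _ => hy1 i)
      rw [smul_eq_mul] at hsle
      have h7 : t * m < D.card * m := by omega
      have h8 := Nat.lt_of_mul_lt_mul_right h7
      omega
    -- first family embedding
    have hb1 : ∀ i : Fin n, m * i.val + (y i - 1) < N := by
      intro i
      have h1 : m * (i.val + 1) ≤ m * n := Nat.mul_le_mul_left m i.isLt
      have h2 : m * (i.val + 1) = m * i.val + m := by ring
      have := hy1 i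
      omega
    set f1 : Fin n → Fin N := fun i => ⟨m * i.val + (y i - 1), hb1 i⟩ with hf1
    have hdiv1 : ∀ i : Fin n, (f1 i).val / m = i.val := by
      intro i
      simp only [hf1]
      rw [Nat.mul_add_div (by omega)]
      have : (y i - 1) / m = 0 := Nat.div_eq_of_lt (by have := hy1 i; omega)
      omega
    have hlt1 : ∀ i : Fin n, (f1 i).val < m * n := by
      intro i
      have h1 : m * (i.val + 1) ≤ m * n := Nat.mul_le_mul_left m i.isLt
      have h2 : m * (i.val + 1) = m * i.val + m := by ring
      have := hy1 i
      simp only [hf1]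
      omega
    have sum_ind : ∀ i : Fin n, ∑ i' : Fin n, (if (i' : ℕ) = (i : ℕ) then (1 : ℝ) else 0) * x i' = x i := by
      intro i
      rw [Finset.sum_eq_single i]
      · rw [if_pos rfl, one_mul]
      · intro b _ hb
        rw [if_neg (fun h => hb (Fin.ext h)), zero_mul]
      · intro h
        exact absurd (Finset.mem_univ i) h
    have cover1 : ∀ i ∈ D, ∑ i', c (f1 i) i' * x i' = (e (f1 i) : ℝ) := by
      intro i hi
      have hyi : y i ≠ 0 := by simpa [hD] using hi
      have hlt := hlt1 i
      have hdiv := hdiv1 i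
      have hmod : (f1 i).val % m = y i - 1 := by
        simp only [hf1]
        rw [Nat.mul_add_mod]
        exact Nat.mod_eq_of_lt (by have := hy1 i; omega)
      simp only [hc, he, if_pos hlt, hdiv, hmod]
      have hy : y i - 1 + 1 = y i := by omega
      rw [hy, sum_ind i]
      exact hy2 i
    -- second family embedding
    set f2 : ℕ → Fin N := fun q =>
      if h : q < k.choose 2 then
        ⟨m * n + (m * q + u), by
          have h1 : m * (q + 1) ≤ m * k.choose 2 := Nat.mul_le_mul_left m h
          have h2 : m * (q + 1) = m * q + m := by ring
          omega⟩
      else ⟨0, by have := Nat.mul_pos (show 0 < m by omega) (show 0 < n by omega); omega⟩ with hf2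
    by_cases hcase : t ≤ k - 2
    · -- use both families
      have hAq : ∀ q ∈ Finset.Ico (A t) (A t + (k - 1 - t)), A t ≤ q ∧ q < A (t + 1) ∧ q < k.choose 2 := by
        intro q hq
        rw [Finset.mem_Ico] at hq
        have hstep := hAstep t hcase
        have h1 : A (t + 1) ≤ k.choose 2 := hAle _
        have h2 : (k - (t + 1)).choose 2 ≤ k.choose 2 := Nat.choose_le_choose 2 (Nat.sub_le _ _)
        refine ⟨hq.1, by omega, ?_⟩
        have hc2 : k - 1 - t ≥ 1 := by omega
        omega
      have cover2 : ∀ q ∈ Finset.Ico (A t) (A t + (k - 1 - t)),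
          ∑ i', c (f2 q) i' * x i' = (e (f2 q) : ℝ) := by
        intro q hq
        obtain ⟨hq1, hq2, hq3⟩ := hAq q hq
        have hfv : (f2 q).val = m * n + (m * q + u) := by
          simp only [hf2, dif_pos hq3]
        have hnlt : ¬ (f2 q).val < m * n := by omega
        have hsub : (f2 q).val - m * n = m * q + u := by omega
        have hqdiv : (m * q + u) / m = q := by
          rw [Nat.mul_add_div (by omega)]
          have : u / m = 0 := Nat.div_eq_of_lt hum
          omega
        have hqmod : (m * q + u) % m = u := by
          rw [Nat.mul_add_mod]
          exact Nat.mod_eq_of_lt hum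
        have hgq : g ((m * q + u) / m) = t := by
          rw [hqdiv]; exact hgval t q hcase hq1 hq2
        simp only [hc, he, if_neg hnlt, hsub, hgq, hqmod]
        have hxsum : ∑ i', (1 : ℝ) * x i' = (s : ℝ) := by
          simp only [one_mul, hs]
          rw [Nat.cast_sum]
          exact Finset.sum_congr rfl (fun i _ => hy2 i)
        rw [hxsum, hsu]
      -- build T
      set T1 := D.image f1 with hT1
      set T2 := (Finset.Ico (A t) (A t + (k - 1 - t))).image f2 with hT2
      have hinj1 : Set.InjOn f1 D := by
        intro i _ i' _ hii
        have := congrArg (fun j : Fin N => j.val / m) hii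
        simp only [hdiv1] at this
        exact Fin.ext this
      have hinj2 : Set.InjOn f2 (Finset.Ico (A t) (A t + (k - 1 - t))) := by
        intro q hq q' hq' hqq
        have h3 := (hAq q (by simpa using hq)).2.2
        have h3' := (hAq q' (by simpa using hq')).2.2
        have hv := congrArg Fin.val hqq
        simp only [hf2, dif_pos h3, dif_pos h3'] at hv
        have : m * q = m * q' := by omega
        exact Nat.eq_of_mul_eq_mul_left (by omega) this
      have hdisj : Disjoint T1 T2 := by
        rw [Finset.disjoint_left]
        intro j hj1 hj2
        simp only [hT1, Finset.mem_image] at hj1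
        simp only [hT2, Finset.mem_image] at hj2
        obtain ⟨i, _, rfl⟩ := hj1
        obtain ⟨q, hq, hfq⟩ := hj2
        have h3 := (hAq q (by simpa using hq)).2.2
        have hv := congrArg Fin.val hfq
        simp only [hf2, dif_pos h3] at hv
        have hlt' : m * (i : ℕ) + (y i - 1) < m * n := hlt1 i
        have hfi : (f1 i).val = m * (i : ℕ) + (y i - 1) := rfl
        omega
      have hcard : k ≤ (T1 ∪ T2).card := by
        rw [Finset.card_union_of_disjoint hdisj, hT1, hT2,
          Finset.card_image_of_injOn hinj1, Finset.card_image_of_injOn hinj2,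
          Nat.card_Ico]
        omega
      have hsubset : ↑(T1 ∪ T2) ⊆ {j : Fin N | ∑ i, c j i * x i = (e j : ℝ)} := by
        intro j hj
        simp only [Finset.coe_union, Set.mem_union, Finset.mem_coe, hT1, hT2,
          Finset.mem_image] at hj
        rcases hj with ⟨i, hi, rfl⟩ | ⟨q, hq, rfl⟩
        · exact cover1 i hi
        · exact cover2 q hq
      calc k ≤ (T1 ∪ T2).card := hcard
        _ = (↑(T1 ∪ T2) : Set (Fin N)).ncard := (Set.ncard_coe_finset _).symm
        _ ≤ _ := Set.ncard_le_ncard hsubset (Set.toFinite _)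
    · -- t ≥ k - 1, first family suffices
      have hinj1 : Set.InjOn f1 D := by
        intro i _ i' _ hii
        have := congrArg (fun j : Fin N => j.val / m) hii
        simp only [hdiv1] at this
        exact Fin.ext this
      have hcard : k ≤ (D.image f1).card := by
        rw [Finset.card_image_of_injOn hinj1]
        omega
      have hsubset : ↑(D.image f1) ⊆ {j : Fin N | ∑ i, c j i * x i = (e j : ℝ)} := by
        intro j hj
        simp only [Finset.mem_coe, Finset.mem_image] at hj
        obtain ⟨i, hi, rfl⟩ := hj
        exact cover1 i hi
      calc k ≤ (D.image f1).card := hcard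
        _ = (↑(D.image f1) : Set (Fin N)).ncard := (Set.ncard_coe_finset _).symm
        _ ≤ _ := Set.ncard_le_ncard hsubset (Set.toFinite _)
  · -- origin not covered
    intro j
    simp only [mul_zero, Finset.sum_const_zero]
    have : 1 ≤ e j := by
      simp only [he]
      split <;> omega
    have h0 : (0 : ℝ) < (e j : ℝ) := by
      exact_mod_cast Nat.lt_of_lt_of_le Nat.zero_lt_one this
    exact h0.ne
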